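/- Let π : L∞(F) → L∞(G) be regular with π(0) = 0, let ξ' ≥ 0 be in L¹(F) with dμ/dP = ξ', and define R(Y, ξ') := ess inf { π(ξ) : ξ ∈ L∞(F), E[ξ'ξ | G] ≥_μ Y }. Then for every A ∈ G, X ∈ L∞(F) and Y = E[Xξ' | G] (μ-a.s.), one has R(Y, ξ')·1_A = ess inf { π(ξ)·1_A : ξ ∈ L∞(F), E[ξ'ξ·1_A | G] ≥_μ Y·1_A }. -/

import Mathlib

open MeasureTheory Filter Set

noncomputable section

/-- `X` is a bounded `F`-measurable random variable (an element of `L∞(F)`). -/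
def IsBddMeas {Ω : Type*} (F : MeasurableSpace Ω) (X : Ω → ℝ) : Prop :=
  Measurable[F] X ∧ ∃ C : ℝ, ∀ ω, |X ω| ≤ C

/-- Regularity (REG) of the conditional map `π` with respect to the
sub-σ-algebra `m`: `π (X 1_A + Y 1_{Aᶜ}) = π X 1_A + π Y 1_{Aᶜ}` a.s. -/
def Regular {Ω : Type*} (F m : MeasurableSpace Ω) (μ : @Measure Ω F)
    (π : (Ω → ℝ) → Ω → ℝ) : Prop :=
  ∀ X Y : Ω → ℝ, IsBddMeas F X → IsBddMeas F Y → ∀ A : Set Ω, MeasurableSet[m] A →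
    π (A.indicator X + Aᶜ.indicator Y) =ᵐ[μ] A.indicator (π X) + Aᶜ.indicator (π Y)

/-- `I` is an essential infimum (in the `μ`-a.e. pointwise order) of the set
`S` of random variables. -/
def IsEssInf {Ω : Type*} {F : MeasurableSpace Ω} (μ : @Measure Ω F)
    (S : Set (Ω → ℝ)) (I : Ω → ℝ) : Prop :=
  (∀ f ∈ S, I ≤ᵐ[μ] f) ∧ ∀ g : Ω → ℝ, (∀ f ∈ S, g ≤ᵐ[μ] f) → g ≤ᵐ[μ] I

/-- `I` is an essential supremum (in the `μ`-a.e. pointwise order) of the set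
`S` of random variables. -/
def IsEssSup {Ω : Type*} {F : MeasurableSpace Ω} (μ : @Measure Ω F)
    (S : Set (Ω → ℝ)) (I : Ω → ℝ) : Prop :=
  (∀ f ∈ S, f ≤ᵐ[μ] I) ∧ ∀ g : Ω → ℝ, (∀ f ∈ S, f ≤ᵐ[μ] g) → I ≤ᵐ[μ] g
private lemma indicator_integrable' {Ω : Type*} {F : MeasurableSpace Ω} {μ : @Measure Ω F}
    {f : Ω → ℝ} (hf : Integrable f μ) {A : Set Ω} (hA : MeasurableSet[F] A) :
    Integrable (A.indicator f) μ :=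
  hf.indicator hA

/-- Localization of `R(Y, ξ')` on a `G`-measurable set `A`: with
`R(Y,ξ') = ess inf {π ξ : E[ξ'ξ|G] ≥_μ' Y}` and `Y = E[Xξ'|G]` μ'-a.s., one has
`R(Y,ξ')·1_A = ess inf {π(ξ)·1_A : E[ξ'ξ1_A|G] ≥_μ' Y·1_A}`. -/
theorem R_localization
    {Ω : Type*} [F : MeasurableSpace Ω] (μ : Measure Ω) [IsProbabilityMeasure μ]
    (m : MeasurableSpace Ω) (hm : m ≤ F)
    (π : (Ω → ℝ) → Ω → ℝ) (hreg : Regular F m μ π)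
    (hπ0 : π 0 =ᵐ[μ] 0)
    (ξ' : Ω → ℝ) (hξ'pos : 0 ≤ ξ') (hξ'int : Integrable ξ' μ)
    (X : Ω → ℝ) (hX : IsBddMeas F X)
    (A : Set Ω) (hA : MeasurableSet[m] A)
    (Y : Ω → ℝ)
    (hYdef : Y =ᵐ[μ.withDensity fun ω => ENNReal.ofReal (ξ' ω)]
      μ[fun ω => X ω * ξ' ω|m])
    (R : Ω → ℝ)
    (hR : IsEssInf μ
      {g | ∃ ξ : Ω → ℝ, IsBddMeas F ξ ∧
        (Y ≤ᵐ[μ.withDensity fun ω => ENNReal.ofReal (ξ' ω)]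
          μ[fun ω => ξ' ω * ξ ω|m]) ∧ g = π ξ} R) :
    IsEssInf μ
      {g | ∃ ξ : Ω → ℝ, IsBddMeas F ξ ∧
        (A.indicator Y ≤ᵐ[μ.withDensity fun ω => ENNReal.ofReal (ξ' ω)]
          μ[fun ω => ξ' ω * A.indicator ξ ω|m]) ∧ g = A.indicator (π ξ)}
      (A.indicator R) := by
  set μ' := μ.withDensity fun ω => ENNReal.ofReal (ξ' ω) with hμ'
  have ac : μ' ≪ μ := withDensity_absolutelyContinuous μ _
  have hmm : ∀ {p : Ω → Prop}, (∀ᵐ ω ∂μ, p ω) → ∀ᵐ ω ∂μ', p ω :=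
    fun h => h.filter_mono ac.ae_le
  have hAF : MeasurableSet[F] A := hm _ hA
  -- integrability of products
  have hint : ∀ ξ : Ω → ℝ, IsBddMeas F ξ → Integrable (fun ω => ξ' ω * ξ ω) μ := by
    intro ξ hξ
    obtain ⟨C, hC⟩ := hξ.2
    have := hξ'int.bdd_mul hξ.1.aestronglyMeasurable
      (Filter.Eventually.of_forall fun x => by simpa [Real.norm_eq_abs] using hC x)
    simpa [mul_comm] using this
  have hintX : Integrable (fun ω => ξ' ω * X ω) μ := hint X hX
  -- rewriting the multiplied indicator
  have hmulind : ∀ ξ : Ω → ℝ,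
      (fun ω => ξ' ω * A.indicator ξ ω) = A.indicator (fun ω => ξ' ω * ξ ω) := by
    intro ξ; funext ω
    by_cases h : ω ∈ A <;> simp [Set.indicator_apply, h]
  -- conditional expectation of multiplied indicator
  have hceind : ∀ ξ : Ω → ℝ, IsBddMeas F ξ →
      μ[fun ω => ξ' ω * A.indicator ξ ω|m]
        =ᵐ[μ] A.indicator (μ[fun ω => ξ' ω * ξ ω|m]) := by
    intro ξ hξ
    rw [hmulind ξ]
    exact condExp_indicator (hint ξ hξ) hA
  -- Y = E[ξ' X | m] a.e. μ'
  have hY' : Y =ᵐ[μ'] μ[fun ω => ξ' ω * X ω|m] := by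
    have heq : (fun ω => X ω * ξ' ω) = fun ω => ξ' ω * X ω := by
      funext ω; ring
    rw [heq] at hYdef; exact hYdef
  constructor
  · -- lower bound
    rintro f ⟨ξ, hξ, hcon, rfl⟩
    set ξt : Ω → ℝ := A.indicator ξ + Aᶜ.indicator X with hξt
    have hξtb : IsBddMeas F ξt := by
      refine ⟨(hξ.1.indicator hAF).add (hX.1.indicator hAF.compl), ?_⟩
      obtain ⟨C1, h1⟩ := hξ.2; obtain ⟨C2, h2⟩ := hX.2
      refine ⟨|C1| + |C2|, fun ω => ?_⟩
      by_cases h : ω ∈ A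
      · have hv : ξt ω = ξ ω := by
          simp [ξt, Set.indicator_of_mem h, Set.indicator_of_notMem (fun hc : ω ∈ Aᶜ => hc h)]
        rw [hv]; exact le_trans (h1 ω) (by nlinarith [abs_nonneg C2, le_abs_self C1])
      · have hv : ξt ω = X ω := by
          simp [ξt, Set.indicator_of_notMem h, Set.indicator_of_mem (Set.mem_compl h)]
        rw [hv]; exact le_trans (h2 ω) (by nlinarith [abs_nonneg C1, le_abs_self C2])
    -- decomposition of ξ' * ξt
    have hdec : (fun ω => ξ' ω * ξt ω)
        = A.indicator (fun ω => ξ' ω * ξ ω) + Aᶜ.indicator (fun ω => ξ' ω * X ω) := by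
      funext ω
      by_cases h : ω ∈ A <;> simp [ξt, Set.indicator_apply, h]
    have hce : μ[fun ω => ξ' ω * ξt ω|m] =ᵐ[μ]
        A.indicator (μ[fun ω => ξ' ω * ξ ω|m]) + Aᶜ.indicator (μ[fun ω => ξ' ω * X ω|m]) := by
      rw [hdec]
      have hi1 : Integrable (A.indicator fun ω => ξ' ω * ξ ω) μ :=
        indicator_integrable' (hint ξ hξ) hAF
      have hi2 : Integrable (Aᶜ.indicator fun ω => ξ' ω * X ω) μ :=
        indicator_integrable' hintX hAF.compl
      refine (condExp_add hi1 hi2 m).trans ?_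
      exact EventuallyEq.add (condExp_indicator (hint ξ hξ) hA)
        (condExp_indicator hintX hA.compl)
    -- the S' constraint rewritten
    have hcon' : A.indicator Y ≤ᵐ[μ'] A.indicator (μ[fun ω => ξ' ω * ξ ω|m]) := by
      filter_upwards [hcon, hmm (hceind ξ hξ)] with ω h1 h2
      rw [← h2]; exact h1
    -- ξt satisfies the original constraint a.e. μ'
    have hconT : Y ≤ᵐ[μ'] μ[fun ω => ξ' ω * ξt ω|m] := by
      filter_upwards [hcon', hY', hmm hce] with ω h1 h2 h3
      rw [h3]
      by_cases h : ω ∈ A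
      · simpa [Set.indicator_apply, h] using h1
      · simp only [Set.indicator_apply, h, if_false, Set.mem_compl_iff,
          not_false_iff, if_true, Pi.add_apply]
        simp [Set.indicator_of_notMem h, Set.indicator_of_mem (Set.mem_compl h), ← h2]
    have hle : R ≤ᵐ[μ] π ξt := hR.1 _ ⟨ξt, hξtb, hconT, rfl⟩
    have hregt : π ξt =ᵐ[μ] A.indicator (π ξ) + Aᶜ.indicator (π X) :=
      hreg ξ X hξ hX A hA
    filter_upwards [hle, hregt] with ω h1 h2
    by_cases h : ω ∈ A
    · have : π ξt ω = π ξ ω := by simpa [Set.indicator_apply, h] using h2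
      simpa [Set.indicator_apply, h, ← this] using h1
    · simp [Set.indicator_apply, h]
  · -- maximality
    intro g hg
    -- X is admissible in the localized problem
    have hXmem : A.indicator (π X) ∈
        {g | ∃ ξ : Ω → ℝ, IsBddMeas F ξ ∧
          (A.indicator Y ≤ᵐ[μ'] μ[fun ω => ξ' ω * A.indicator ξ ω|m]) ∧
          g = A.indicator (π ξ)} := by
      refine ⟨X, hX, ?_, rfl⟩
      filter_upwards [hY', hmm (hceind X hX)] with ω h1 h2
      rw [h2]
      by_cases h : ω ∈ A <;> simp [Set.indicator_apply, h, h1]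
    have hg0 : g ≤ᵐ[μ] A.indicator (π X) := hg _ hXmem
    -- every S-admissible ξ gives a localized admissible element
    have hh : ∀ f ∈ {g | ∃ ξ : Ω → ℝ, IsBddMeas F ξ ∧
        (Y ≤ᵐ[μ'] μ[fun ω => ξ' ω * ξ ω|m]) ∧ g = π ξ},
        A.indicator g + Aᶜ.indicator R ≤ᵐ[μ] f := by
      rintro f ⟨ξ, hξ, hcon, rfl⟩
      have hmem' : A.indicator (π ξ) ∈
          {g | ∃ ξ : Ω → ℝ, IsBddMeas F ξ ∧
            (A.indicator Y ≤ᵐ[μ'] μ[fun ω => ξ' ω * A.indicator ξ ω|m]) ∧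
            g = A.indicator (π ξ)} := by
        refine ⟨ξ, hξ, ?_, rfl⟩
        filter_upwards [hcon, hmm (hceind ξ hξ)] with ω h1 h2
        rw [h2]
        by_cases h : ω ∈ A <;> simp [Set.indicator_apply, h, h1]
      have h1 := hg _ hmem'
      have h2 := hR.1 _ ⟨ξ, hξ, hcon, rfl⟩
      filter_upwards [h1, h2] with ω h1 h2
      by_cases h : ω ∈ A
      · simp only [Pi.add_apply, Set.indicator_of_mem h,
          Set.indicator_of_notMem (fun hc : ω ∈ Aᶜ => hc h), add_zero]
        simpa [Set.indicator_of_mem h] using h1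
      · simp only [Pi.add_apply, Set.indicator_of_notMem h,
          Set.indicator_of_mem (Set.mem_compl h), zero_add]
        exact h2
    have hfin := hR.2 _ hh
    filter_upwards [hfin, hg0] with ω h1 h2
    by_cases h : ω ∈ A
    · simpa [Set.indicator_apply, h] using h1
    · simpa [Set.indicator_apply, h] using h2
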